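/- For every element w of the monoid M presented by ⟨x, y, e | e³ = e, xey = y, xe²y = x, xy = 1⟩, there exist p, q ∈ M such that p·w·q ∈ {1, e, e²}. -/

import Mathlib

/-- The alphabet `A = {x, y, e}`. -/
inductive Alpha : Type
  | x | y | e
  deriving DecidableEq

/-- The defining relations `e³ = e`, `xey = y`, `xe²y = x`, `xy = 1`. -/
def rel : FreeMonoid Alpha → FreeMonoid Alpha → Prop := fun a b =>
  (a = .of .e * .of .e * .of .e ∧ b = .of .e) ∨
  (a = .of .x * .of .e * .of .y ∧ b = .of .y) ∨
  (a = .of .x * .of .e * .of .e * .of .y ∧ b = .of .x) ∨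
  (a = .of .x * .of .y ∧ b = 1)

/-- The monoid `M = ⟨x, y, e | e³ = e, xey = y, xe²y = x, xy = 1⟩`. -/
abbrev M := PresentedMonoid rel

/-- The image of `x` in `M`. -/
def X : M := PresentedMonoid.of rel .x
/-- The image of `y` in `M`. -/
def Y : M := PresentedMonoid.of rel .y
/-- The image of `e` in `M`. -/
def E : M := PresentedMonoid.of rel .e

def fw (l : List Alpha) : M := PresentedMonoid.mk rel (FreeMonoid.ofList l)
lemma fw_nil : fw [] = 1 := rfl
lemma fw_cons (a : Alpha) (l : List Alpha) : fw (a :: l) = PresentedMonoid.of rel a * fw l := rfl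
lemma fw_append (u v : List Alpha) : fw (u ++ v) = fw u * fw v := by
  unfold fw; rw [FreeMonoid.ofList_append, map_mul]
lemma rel_eq {a b : FreeMonoid Alpha} (h : rel a b) :
    PresentedMonoid.mk rel a = PresentedMonoid.mk rel b := Quotient.sound (ConGen.Rel.of a b h)
lemma of_x : PresentedMonoid.of rel .x = X := rfl
lemma of_y : PresentedMonoid.of rel .y = Y := rfl
lemma of_e : PresentedMonoid.of rel .e = E := rfl
lemma a1 : X * Y = 1 := by
  have := rel_eq (Or.inr (Or.inr (Or.inr ⟨rfl, rfl⟩)))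
  simp [map_mul] at this; exact this
lemma a2 : X * (E * Y) = Y := by
  have := rel_eq (Or.inr (Or.inl ⟨rfl, rfl⟩))
  simp [map_mul, mul_assoc] at this; exact this
lemma a3 : X * (E * (E * Y)) = X := by
  have := rel_eq (Or.inr (Or.inr (Or.inl ⟨rfl, rfl⟩)))
  simp [map_mul, mul_assoc] at this; exact this
lemma a4 : E * (E * E) = E := by
  have := rel_eq (Or.inl ⟨rfl, rfl⟩)
  simp [map_mul, mul_assoc] at this; exact this
lemma b1 (t : M) : X * (Y * t) = t := by rw [← mul_assoc, a1, one_mul]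
lemma b2 (t : M) : X * (E * (Y * t)) = Y * t := by
  rw [show X * (E * (Y * t)) = (X * (E * Y)) * t by simp [mul_assoc], a2]
lemma b3 (t : M) : X * (E * (E * (Y * t))) = X * t := by
  rw [show X * (E * (E * (Y * t))) = (X * (E * (E * Y))) * t by simp [mul_assoc], a3]
lemma b4 (t : M) : E * (E * (E * t)) = E * t := by
  rw [show E * (E * (E * t)) = (E * (E * E)) * t by simp [mul_assoc], a4]

/-- stepL -/
lemma stepL (a : ℕ) (g r : M) : X ^ (a + 1) * g * r = X * (X ^ a * g * r) := by
  rw [pow_succ']; simp [mul_assoc]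
lemma stepR (b : ℕ) (g r : M) : r * g * Y ^ (b + 1) = r * g * Y ^ b * Y := by
  rw [pow_succ]; simp [mul_assoc]
lemma stepM {g g' : M} (h : X * g = X * g') (a : ℕ) :
    X ^ (a + 1) * g = X ^ (a + 1) * g' := by
  rw [pow_succ, mul_assoc, h, ← mul_assoc]

/-- the lemma for x-free words -/
lemma L1 : ∀ n (l : List Alpha), l.length ≤ n → Alpha.x ∉ l →
    ∃ a b : ℕ, X ^ a * fw l * Y ^ b = 1 ∨ X ^ a * fw l * Y ^ b = E ∨
      X ^ a * fw l * Y ^ b = E * E := by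
  intro n
  induction n with
  | zero =>
    intro l hl _
    rw [List.length_eq_zero_iff.mp (Nat.le_zero.mp hl)]
    exact ⟨0, 0, Or.inl (by simp [fw_nil])⟩
  | succ n IH =>
    intro l hl hx
    match l with
    | [] => exact ⟨0, 0, Or.inl (by simp [fw_nil])⟩
    | .x :: u => simp at hx
    | .y :: u =>
      obtain ⟨a, b, h⟩ := IH u (by simp at hl; omega)
        (fun hmem => hx (List.mem_cons_of_mem _ hmem))
      refine ⟨a + 1, b, ?_⟩
      have key : X ^ (a + 1) * fw (Alpha.y :: u) = X ^ a * fw u := by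
        rw [fw_cons, of_y, pow_succ, mul_assoc, b1]
      rw [key]; exact h
    | [.e] =>
      exact ⟨0, 0, Or.inr (Or.inl (by simp [fw_cons, fw_nil, of_e]))⟩
    | [.e, .e] =>
      exact ⟨0, 0, Or.inr (Or.inr (by simp [fw_cons, fw_nil, of_e]))⟩
    | .e :: .x :: u => simp at hx
    | .e :: .e :: .x :: u => simp at hx
    | .e :: .y :: u =>
      obtain ⟨a, b, h⟩ := IH (.y :: u) (by simp at hl ⊢; omega)
        (by simp at hx ⊢; tauto)
      refine ⟨a + 1, b, ?_⟩
      have key : X ^ (a + 1) * fw (Alpha.e :: Alpha.y :: u) = X ^ a * fw (Alpha.y :: u) := by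
        simp only [fw_cons, of_e, of_y]
        rw [pow_succ, mul_assoc, b2]
      rw [key]; exact h
    | .e :: .e :: .y :: u =>
      obtain ⟨a, b, h⟩ := IH u (by simp at hl ⊢; omega) (by simp at hx ⊢; tauto)
      have hXl : X * fw (Alpha.e :: Alpha.e :: Alpha.y :: u) = X * fw u := by
        simp [fw_cons, of_e, of_y, b3]
      rcases h with h | h | h
      · refine ⟨a + 1, b + 1, Or.inl ?_⟩
        rw [stepR, stepM hXl a, stepL, h, mul_one, a1]
      · refine ⟨a + 2, b + 1, Or.inl ?_⟩
        rw [stepR, stepM hXl (a + 1), stepL, stepL, h,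
          show X * (X * E) * Y = X * (X * (E * Y)) by simp [mul_assoc], a2, a1]
      · refine ⟨a + 1, b + 2, Or.inl ?_⟩
        rw [stepR, stepR, stepM hXl a, stepL, h,
          show X * (E * E) * Y * Y = X * (E * (E * Y)) * Y by simp [mul_assoc], a3, a1]
    | .e :: .e :: .e :: u =>
      obtain ⟨a, b, h⟩ := IH (.e :: u) (by simp at hl ⊢; omega) (by simp at hx ⊢; tauto)
      have key : fw (Alpha.e :: Alpha.e :: Alpha.e :: u) = fw (Alpha.e :: u) := by
        simp [fw_cons, of_e, b4]
      rw [key]; exact ⟨a, b, h⟩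

lemma last_x : ∀ l : List Alpha, Alpha.x ∈ l →
    ∃ u v, l = u ++ Alpha.x :: v ∧ Alpha.x ∉ v := by
  intro l
  induction l using List.reverseRecOn with
  | nil => simp
  | append_singleton l a IH =>
    intro h
    by_cases ha : a = Alpha.x
    · subst ha; exact ⟨l, [], rfl, by simp⟩
    · have hx : Alpha.x ∈ l := by
        rcases List.mem_append.mp h with h' | h'
        · exact h'
        · simp at h'; exact absurd h'.symm ha
      obtain ⟨u, v, rfl, hv⟩ := IH hx
      exact ⟨u, v ++ [a], by simp, by
        simp only [List.mem_append, List.mem_singleton]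
        rintro (h' | h')
        · exact hv h'
        · exact ha h'.symm⟩

def Good (w : M) : Prop := ∃ p q : M, p * w * q = 1 ∨ p * w * q = E ∨ p * w * q = E * E

lemma good_right {w w' : List Alpha} (h : fw w * Y = fw w') (H : Good (fw w')) :
    Good (fw w) := by
  obtain ⟨p, q, hpq⟩ := H
  refine ⟨p, Y * q, ?_⟩
  rw [show p * fw w * (Y * q) = p * (fw w * Y) * q by simp [mul_assoc], h]
  exact hpq

lemma good_of_eq {w w' : List Alpha} (h : fw w = fw w') (H : Good (fw w')) : Good (fw w) := by
  rw [h]; exact H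

lemma main : ∀ n (l : List Alpha), l.length ≤ n → Good (fw l) := by
  intro n
  induction n with
  | zero =>
    intro l hl
    rw [List.length_eq_zero_iff.mp (Nat.le_zero.mp hl)]
    exact ⟨1, 1, Or.inl (by simp [fw_nil])⟩
  | succ n IH =>
    intro l hl
    by_cases hx : Alpha.x ∈ l
    · obtain ⟨u, v, rfl, hv⟩ := last_x l hx
      have hlu : u.length + v.length + 1 ≤ n + 1 := by simp at hl; omega
      match v, hv with
      | [], _ =>
        refine good_right (w' := u) ?_ (IH u (by omega))
        simp [fw_append, fw_cons, fw_nil, of_x, mul_assoc, a1]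
      | .y :: v', hv =>
        refine good_of_eq (w' := u ++ v') ?_ (IH _ (by simp at hlu ⊢; omega))
        simp [fw_append, fw_cons, of_x, of_y, b1]
      | [.e], _ =>
        refine good_right (w' := u ++ [.y]) ?_ (IH _ (by simp at hlu ⊢; omega))
        simp [fw_append, fw_cons, fw_nil, of_x, of_y, of_e, mul_assoc, a2]
      | .e :: .y :: v', hv =>
        refine good_of_eq (w' := u ++ .y :: v') ?_ (IH _ (by simp at hlu ⊢; omega))
        simp [fw_append, fw_cons, of_x, of_y, of_e, b2]
      | [.e, .e], _ =>
        refine good_right (w' := u ++ [.x]) ?_ (IH _ (by simp at hlu ⊢; omega))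
        simp [fw_append, fw_cons, fw_nil, of_x, of_e, mul_assoc, a3]
      | .e :: .e :: .y :: v', hv =>
        refine good_of_eq (w' := u ++ .x :: v') ?_ (IH _ (by simp at hlu ⊢; omega))
        simp [fw_append, fw_cons, of_x, of_y, of_e, b3]
      | .e :: .e :: .e :: v', hv =>
        refine good_of_eq (w' := u ++ .x :: .e :: v') ?_ (IH _ (by simp at hlu ⊢; omega))
        simp [fw_append, fw_cons, of_x, of_e, b4]
      | .x :: v', hv => simp at hv
      | .e :: .x :: v', hv => simp at hv
      | .e :: .e :: .x :: v', hv => simp at hv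
    · obtain ⟨a, b, h⟩ := L1 l.length l le_rfl hx
      exact ⟨X ^ a, Y ^ b, h⟩


/-- For every `w ∈ M` there are `p, q ∈ M` with `p·w·q ∈ {1, e, e²}`. -/
theorem stmt_10 : ∀ w : M, ∃ p q : M, p * w * q = 1 ∨ p * w * q = E ∨ p * w * q = E ^ 2 := by
  intro w
  obtain ⟨l, rfl⟩ := PresentedMonoid.surjective_mk (rels := rel) w
  have : Good (fw l.toList) := main _ _ le_rfl
  obtain ⟨p, q, h⟩ := this
  exact ⟨p, q, by rw [pow_two]; exact h⟩
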